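/- Under the interference-alignment hypotheses, let X ⊆ {1,…,k} be a subset such that Σ_{i∈X} rowSpace(S_i) = 𝔽^l, and let Δ be a non-zero l × l matrix over 𝔽 such that rowSpace(S_i · Δ) ⊆ rowSpace(S_i) for every i ∈ X. Then for every u ∈ {2,…,r}, the matrix Δ · (Σ_{j∈X} C_{u,j}) is non-zero. -/

import Mathlib

open Submodule

private lemma rowsp_mul {𝔽 : Type*} [Field 𝔽] {a l : ℕ}
    (A : Matrix (Fin a) (Fin l) 𝔽) (B : Matrix (Fin l) (Fin l) 𝔽) :
    Submodule.span 𝔽 (Set.range (A * B)) =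
      (Submodule.span 𝔽 (Set.range A)).map B.vecMulLinear := by
  rw [Submodule.map_span, ← Set.range_comp (f := (A : Fin a → Fin l → 𝔽))]
  have h : (B.vecMulLinear ∘ A) = fun i => (A * B) i := by
    funext i j
    change B.vecMulLinear (A i) j = (A * B) i j
    simp [Matrix.mul_apply, Matrix.vecMul, dotProduct]
  rw [h]

private lemma row_mem {𝔽 : Type*} [Field 𝔽] {a l : ℕ}
    (A : Matrix (Fin a) (Fin l) 𝔽) (i : Fin a) :
    A i ∈ Submodule.span 𝔽 (Set.range A) :=
  Submodule.subset_span (Set.mem_range_self i)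

theorem stmt_11 {𝔽 : Type*} [Field 𝔽] (k r l : ℕ)
    (hk : 0 < k) (hr : 2 ≤ r) (hl : 0 < l) (hrl : r ∣ l)
    (S : Fin k → Matrix (Fin (l / r)) (Fin l) 𝔽)
    (C : Fin r → Fin k → Matrix (Fin l) (Fin l) 𝔽)
    (hCinv : ∀ u j, IsUnit (C u j))
    (hC1 : ∀ j, C ⟨0, by omega⟩ j = 1)
    (hIA1 : ∀ (i j : Fin k), j ≠ i → ∀ u : Fin r,
      Submodule.span 𝔽 (Set.range (S i * C u j)) = Submodule.span 𝔽 (Set.range (S i)))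
    (hIA2 : ∀ i : Fin k, iSupIndep
      fun u : Fin r => Submodule.span 𝔽 (Set.range (S i * C u i)))
    (hIA3 : ∀ i : Fin k,
      (⨆ u : Fin r, Submodule.span 𝔽 (Set.range (S i * C u i))) = ⊤)
    (X : Finset (Fin k))
    (hX : (⨆ i ∈ X, Submodule.span 𝔽 (Set.range (S i))) = ⊤)
    (Δ : Matrix (Fin l) (Fin l) 𝔽) (hΔ : Δ ≠ 0)
    (hsub : ∀ i ∈ X,
      Submodule.span 𝔽 (Set.range (S i * Δ)) ≤ Submodule.span 𝔽 (Set.range (S i))) :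
    ∀ u : Fin r, (u : ℕ) ≠ 0 → Δ * (∑ j ∈ X, C u j) ≠ 0 := by
  intro u hu h0
  set u0 : Fin r := ⟨0, by omega⟩ with hu0
  -- Step A: for each i ∈ X, S i * Δ = 0
  have hSiΔ : ∀ i ∈ X, S i * Δ = 0 := by
    intro i hi
    -- rows of S i * Δ * C u j lie in rowsp (S i) for j ≠ i (j ∈ X)
    have hrow : ∀ j ∈ X, j ≠ i →
        Submodule.span 𝔽 (Set.range (S i * Δ * C u j)) ≤
          Submodule.span 𝔽 (Set.range (S i)) := by
      intro j hj hji
      rw [rowsp_mul]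
      calc (Submodule.span 𝔽 (Set.range (S i * Δ))).map (C u j).vecMulLinear
          ≤ (Submodule.span 𝔽 (Set.range (S i))).map (C u j).vecMulLinear :=
            Submodule.map_mono (hsub i hi)
        _ = Submodule.span 𝔽 (Set.range (S i * C u j)) := (rowsp_mul _ _).symm
        _ = Submodule.span 𝔽 (Set.range (S i)) := hIA1 i j hji u
    -- S i * Δ * (sum) = 0
    have hsum : ∑ j ∈ X, S i * Δ * C u j = 0 := by
      rw [← Matrix.mul_sum, Matrix.mul_assoc, h0, Matrix.mul_zero]
    -- the i-term equals minus the rest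
    have hterm : S i * Δ * C u i = -∑ j ∈ X.erase i, S i * Δ * C u j := by
      have h := Finset.add_sum_erase X (fun j => S i * Δ * C u j) hi
      rw [hsum] at h
      exact eq_neg_of_add_eq_zero_left h
    -- hence rowsp (S i * Δ * C u i) ≤ rowsp (S i)
    have h1 : Submodule.span 𝔽 (Set.range (S i * Δ * C u i)) ≤
        Submodule.span 𝔽 (Set.range (S i)) := by
      rw [Submodule.span_le]
      rintro _ ⟨m, rfl⟩
      have hrows : (S i * Δ * C u i) m = ∑ j ∈ X.erase i, -((S i * Δ * C u j) m) := by
        funext j'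
        have hh := congrFun (congrFun hterm m) j'
        simpa [Matrix.neg_apply, Matrix.sum_apply, Finset.sum_apply,
          Finset.sum_neg_distrib] using hh
      rw [hrows]
      refine Submodule.sum_mem _ fun j hj => neg_mem ?_
      exact hrow j (Finset.mem_of_mem_erase hj) (Finset.ne_of_mem_erase hj) (row_mem _ m)
    -- also rowsp (S i * Δ * C u i) ≤ rowsp (S i * C u i)
    have h2 : Submodule.span 𝔽 (Set.range (S i * Δ * C u i)) ≤
        Submodule.span 𝔽 (Set.range (S i * C u i)) := by
      rw [rowsp_mul (S i * Δ) (C u i), rowsp_mul (S i) (C u i)]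
      exact Submodule.map_mono (hsub i hi)
    -- rowsp (S i) = rowsp (S i * C u0 i)
    have h3 : Submodule.span 𝔽 (Set.range (S i)) =
        Submodule.span 𝔽 (Set.range (S i * C u0 i)) := by
      rw [hC1 i, Matrix.mul_one]
    -- disjointness
    have hne : u ≠ u0 := by
      intro h; apply hu; rw [h]
    have hdisj : Disjoint (Submodule.span 𝔽 (Set.range (S i * C u i)))
        (Submodule.span 𝔽 (Set.range (S i * C u0 i))) :=
      (hIA2 i).pairwiseDisjoint hne
    have hzero : S i * Δ * C u i = 0 := by
      funext m j
      have hm : (S i * Δ * C u i) m ∈ (⊥ : Submodule 𝔽 (Fin l → 𝔽)) := by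
        have := hdisj.le_bot ⟨h2 (row_mem _ m), h3 ▸ h1 (row_mem _ m)⟩
        exact this
      rw [Submodule.mem_bot] at hm
      have := congrFun hm j
      simpa using this
    -- cancel C u i
    have hdet : IsUnit (C u i).det := (Matrix.isUnit_iff_isUnit_det _).mp (hCinv u i)
    have h4 : S i * Δ * C u i * (C u i)⁻¹ = 0 := by rw [hzero, Matrix.zero_mul]
    rwa [Matrix.mul_assoc, Matrix.mul_nonsing_inv _ hdet, Matrix.mul_one] at h4
  -- Step B: Δ = 0, contradiction
  apply hΔ
  have hker : ∀ v : Fin l → 𝔽, v ∈ LinearMap.ker Δ.vecMulLinear := by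
    intro v
    have hle : (⨆ i ∈ X, Submodule.span 𝔽 (Set.range (S i))) ≤
        LinearMap.ker Δ.vecMulLinear := by
      refine iSup_le fun i => iSup_le fun hi => ?_
      rw [Submodule.span_le]
      rintro _ ⟨m, rfl⟩
      simp only [SetLike.mem_coe, LinearMap.mem_ker, Matrix.vecMulLinear_apply]
      have := congrFun (hSiΔ i hi) m
      funext j
      have h := congrFun this j
      simpa [Matrix.mul_apply, Matrix.vecMul, dotProduct] using h
    exact hle (hX ▸ Submodule.mem_top)
  funext i j
  have hv := hker (Pi.single i 1)
  rw [LinearMap.mem_ker] at hv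
  have hvj := congrFun hv j
  rw [Matrix.vecMulLinear_apply] at hvj
  simpa [Matrix.vecMul, dotProduct, Pi.single_apply, Finset.sum_ite_eq] using hvj
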